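/- (Correctness of the paper's string-equality encoding via string–number conversion.) For all binary words α and β: α = β if and only if |α| = |β| and val(1·α·1·β) = val(1·β·1·α). -/
import Mathlib


/-- Value of a binary word (big-endian, `true` = 1, `false` = 0):
`val w = Σ_{j=1}^{|w|} w[j] · 2^{|w|-j}`. -/
def binVal : List Bool → ℕ :=
  fun w => w.foldl (fun n b => 2 * n + (if b then 1 else 0)) 0

lemma binVal_aux (w : List Bool) (n : ℕ) :
    w.foldl (fun n b => 2 * n + (if b then 1 else 0)) n = n * 2 ^ w.length + binVal w := by
  induction w generalizing n with
  | nil => simp [binVal]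
  | cons b w ih =>
    have h1 := ih (2 * n + (if b then 1 else 0))
    have h2 := ih (if b then 1 else 0)
    simp only [binVal, List.foldl_cons, Nat.mul_zero, Nat.zero_add] at *
    rw [h1, h2]
    cases b <;> simp [pow_succ] <;> ring

lemma binVal_cons (b : Bool) (w : List Bool) :
    binVal (b :: w) = (if b then 1 else 0) * 2 ^ w.length + binVal w := by
  simpa [binVal] using binVal_aux w (if b then 1 else 0)

lemma binVal_append (u v : List Bool) :
    binVal (u ++ v) = binVal u * 2 ^ v.length + binVal v := by
  simpa [binVal, List.foldl_append] using binVal_aux v (binVal u)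

lemma binVal_lt (w : List Bool) : binVal w < 2 ^ w.length := by
  induction w with
  | nil => simp [binVal]
  | cons b w ih =>
    rw [binVal_cons]
    have : (if b then 1 else 0) ≤ 1 := by cases b <;> simp
    calc (if b then 1 else 0) * 2 ^ w.length + binVal w
        < (if b then 1 else 0) * 2 ^ w.length + 2 ^ w.length := by omega
      _ ≤ 1 * 2 ^ w.length + 2 ^ w.length := by
          have := Nat.mul_le_mul_right (2 ^ w.length) this; omega
      _ ≤ 2 ^ (b :: w).length := by simp [pow_succ]; ring_nf; omega

lemma binVal_inj (u v : List Bool) (hl : u.length = v.length)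
    (hv : binVal u = binVal v) : u = v := by
  induction u generalizing v with
  | nil => cases v <;> simp_all
  | cons b u ih =>
    cases v with
    | nil => simp_all
    | cons c v =>
      simp only [List.length_cons, Nat.succ.injEq] at hl
      rw [binVal_cons, binVal_cons, hl] at hv
      have h1 := binVal_lt u
      have h2 := binVal_lt v
      rw [hl] at h1
      have hb : b = c := by cases b <;> cases c <;> simp_all <;> omega
      subst hb
      have : binVal u = binVal v := by cases b <;> simp_all
      rw [ih v hl this]

theorem stmt_4 (α β : List Bool) :
    α = β ↔
      α.length = β.length ∧
      binVal ([true] ++ α ++ [true] ++ β) = binVal ([true] ++ β ++ [true] ++ α) := by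
  constructor
  · rintro rfl; exact ⟨rfl, rfl⟩
  · rintro ⟨hl, hv⟩
    refine binVal_inj α β hl ?_
    have e1 : binVal ([true] ++ α ++ [true] ++ β)
        = ((2 ^ α.length + binVal α) * 2 + 1) * 2 ^ β.length + binVal β := by
      rw [binVal_append, binVal_append, binVal_append]
      simp [binVal]
    have e2 : binVal ([true] ++ β ++ [true] ++ α)
        = ((2 ^ β.length + binVal β) * 2 + 1) * 2 ^ α.length + binVal α := by
      rw [binVal_append, binVal_append, binVal_append]
      simp [binVal]
    rw [e1, e2, hl] at hv
    have h1 := binVal_lt α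
    have h2 := binVal_lt β
    rw [hl] at h1
    -- hv : (2^n + A)*2*2^n + 2^n + B = (2^n + B)*2*2^n + 2^n + A  → A = B
    nlinarith [hv, h1, h2]
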